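/- Lipschitz continuity of the von Neumann entropy on matrices: for any x, y ∈ Matrix (Fin n) (Fin n) ℂ, setting t = max(‖x‖, ‖y‖, 1), one has |H(|x|²) − H(|y|²)| ≤ (4 t * Real.log t + 2 t) * n * ‖x − y‖. -/

import Mathlib

open Finset

/-- The `ℓ² → ℓ²` operator norm of a matrix, via its action on Euclidean space. -/
noncomputable def matOpNorm {n : ℕ} (A : Matrix (Fin n) (Fin n) ℂ) : ℝ :=
  ‖Matrix.toEuclideanCLM (𝕜 := ℂ) A‖

/-- The von Neumann entropy of `|x|²`, i.e. `-∑ μ i * log (μ i)` where `μ` are the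
eigenvalues of the Hermitian matrix `xᴴ * x` (with multiplicity); since
`Real.log 0 = 0`, the convention `0 * log 0 = 0` holds automatically. -/
noncomputable def vnEnt {n : ℕ} (x : Matrix (Fin n) (Fin n) ℂ) : ℝ :=
  -∑ i, (Matrix.isHermitian_conjTranspose_mul_self x).eigenvalues i *
      Real.log ((Matrix.isHermitian_conjTranspose_mul_self x).eigenvalues i)

section Aux
open Matrix

lemma neg_mul_log_le_half {s : ℝ} (hs : 0 < s) : s * (-Real.log s) ≤ 1/2 := by
  have hr : 0 < Real.sqrt s := Real.sqrt_pos.2 hs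
  have hs' : Real.sqrt s ^ 2 = s := Real.sq_sqrt hs.le
  have hlog : Real.log s = 2 * Real.log (Real.sqrt s) := by
    rw [Real.log_sqrt hs.le]; ring
  have h1 : -Real.log (Real.sqrt s) ≤ (Real.sqrt s)⁻¹ - 1 := by
    have h2 := Real.log_le_sub_one_of_pos (inv_pos.2 hr)
    rw [Real.log_inv] at h2
    linarith
  have hinv : Real.sqrt s * (Real.sqrt s)⁻¹ = 1 := mul_inv_cancel₀ hr.ne'
  have hsi : s * (Real.sqrt s)⁻¹ = Real.sqrt s := by
    rw [← div_eq_mul_inv, Real.div_sqrt]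
  have key : s * (-Real.log s) ≤ 2 * (Real.sqrt s - s) := by
    have h3 := mul_le_mul_of_nonneg_left h1 (by positivity : (0:ℝ) ≤ 2 * s)
    calc s * (-Real.log s) = 2 * s * (-Real.log (Real.sqrt s)) := by rw [hlog]; ring
    _ ≤ 2 * s * ((Real.sqrt s)⁻¹ - 1) := h3
    _ = 2 * (s * (Real.sqrt s)⁻¹) - 2 * s := by ring
    _ = 2 * (Real.sqrt s - s) := by rw [hsi]; ring
  nlinarith [sq_nonneg (Real.sqrt s - 1/2)]

/-- derivative of `s ↦ s^2 * log (s^2)` at `s ≠ 0`. -/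
lemma hasDerivAt_F {s : ℝ} (hs : s ≠ 0) :
    HasDerivAt (fun s : ℝ => s^2 * Real.log (s^2)) (4 * s * Real.log s + 2 * s) s := by
  have h1 : HasDerivAt (fun s : ℝ => s^2) (2 * s) s := by
    simpa using (hasDerivAt_pow 2 s)
  have h2 : HasDerivAt (fun s : ℝ => Real.log (s^2)) (2 * s / s^2) s :=
    h1.log (pow_ne_zero 2 hs)
  have h3 := h1.mul h2
  refine h3.congr_deriv ?_
  have hlog : Real.log (s^2) = 2 * Real.log s := by
    rw [Real.log_pow]; push_cast; ring
  rw [hlog]; field_simp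
  ring

lemma deriv_F_bound {t s : ℝ} (ht : 1 ≤ t) (hs : 0 < s) (hst : s ≤ t) :
    |4 * s * Real.log s + 2 * s| ≤ 4 * t * Real.log t + 2 * t := by
  have hlt : 0 ≤ Real.log t := Real.log_nonneg ht
  rcases le_or_gt s 1 with h1 | h1
  · -- s ≤ 1 : |value| ≤ 2 ≤ 2t
    have hls : Real.log s ≤ 0 := Real.log_nonpos hs.le h1
    have hhalf : s * (-Real.log s) ≤ 1/2 := neg_mul_log_le_half hs
    rw [abs_le]
    constructor <;> nlinarith
  · -- 1 ≤ s : positive, monotone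
    have hls : 0 ≤ Real.log s := Real.log_nonneg h1.le
    have hmono : Real.log s ≤ Real.log t := Real.log_le_log hs hst
    rw [abs_of_nonneg (by nlinarith)]
    nlinarith

lemma F_lipschitz {t a b : ℝ} (ht : 1 ≤ t) (ha : a ∈ Set.Icc (0:ℝ) t) (hb : b ∈ Set.Icc (0:ℝ) t) :
    |a^2 * Real.log (a^2) - b^2 * Real.log (b^2)| ≤ (4 * t * Real.log t + 2 * t) * |a - b| := by
  -- wlog b ≤ a
  wlog hab : b ≤ a generalizing a b
  · rw [abs_sub_comm, abs_sub_comm a b]; exact this hb ha (le_of_not_ge hab)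
  obtain ⟨hb0, hbt⟩ := hb
  obtain ⟨ha0, hat⟩ := ha
  have hlt : 0 ≤ Real.log t := Real.log_nonneg ht
  rcases eq_or_lt_of_le hb0 with hb0' | hb0'
  · -- b = 0
    subst hb0'
    rcases eq_or_lt_of_le ha0 with ha0' | ha0'
    · subst ha0'; simp
    · have hloga : Real.log (a^2) = 2 * Real.log a := by
        rw [Real.log_pow]; push_cast; ring
      rw [sub_zero, abs_of_nonneg ha0]
      simp only [ne_eq, OfNat.ofNat_ne_zero, not_false_eq_true, zero_pow, Real.log_zero,
        mul_zero, sub_zero, zero_mul]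
      rw [hloga]
      rcases le_or_gt a 1 with h1 | h1
      · have hls : Real.log a ≤ 0 := Real.log_nonpos ha0 h1
        have hhalf : a * (-Real.log a) ≤ 1/2 := neg_mul_log_le_half ha0'
        have hkey : -(a^2 * (2 * Real.log a)) ≤ a := by nlinarith
        rw [abs_of_nonpos (by nlinarith [sq_nonneg a])]
        nlinarith [mul_nonneg (mul_nonneg (by linarith : (0:ℝ) ≤ 4*t) hlt) ha0,
          mul_le_mul_of_nonneg_right (by linarith : (1:ℝ) ≤ 2*t) ha0]
      · have hls : 0 ≤ Real.log a := Real.log_nonneg h1.le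
        have hmono : Real.log a ≤ Real.log t := Real.log_le_log ha0' hat
        have h4 : a * Real.log a ≤ t * Real.log t :=
          mul_le_mul hat hmono hls (by linarith)
        have h5 : a * (a * Real.log a) ≤ a * (t * Real.log t) :=
          mul_le_mul_of_nonneg_left h4 ha0
        rw [abs_of_nonneg (by positivity)]
        nlinarith
  · -- 0 < b ≤ a, use MVT on Ioc 0 t
    have hconv : Convex ℝ (Set.Ioc (0:ℝ) t) := convex_Ioc 0 t
    have hdiff : ∀ s ∈ Set.Ioc (0:ℝ) t, DifferentiableAt ℝ (fun s : ℝ => s^2 * Real.log (s^2)) s :=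
      fun s hs => (hasDerivAt_F (ne_of_gt hs.1)).differentiableAt
    have hbound : ∀ s ∈ Set.Ioc (0:ℝ) t,
        ‖deriv (fun s : ℝ => s^2 * Real.log (s^2)) s‖ ≤ 4 * t * Real.log t + 2 * t := by
      intro s hs
      rw [(hasDerivAt_F (ne_of_gt hs.1)).deriv]
      exact deriv_F_bound ht hs.1 hs.2
    have := hconv.norm_image_sub_le_of_norm_deriv_le hdiff hbound
      (Set.mem_Ioc.2 ⟨hb0', hbt⟩) (Set.mem_Ioc.2 ⟨lt_of_lt_of_le hb0' hab, hat⟩)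
    simpa [Real.norm_eq_abs] using this

variable {n : ℕ}

local notation "⟪" x ", " y "⟫" => @inner ℂ _ _ x y

lemma clm_eigen {A : Matrix (Fin n) (Fin n) ℂ} (hA : A.IsHermitian) (i : Fin n) :
    Matrix.toEuclideanCLM (𝕜 := ℂ) A (hA.eigenvectorBasis i) =
      (hA.eigenvalues i : ℂ) • hA.eigenvectorBasis i := by
  apply (WithLp.equiv 2 _).injective
  rw [show ∀ z, WithLp.equiv 2 _ (Matrix.toEuclideanCLM (𝕜 := ℂ) A z) = Matrix.toLin' A (WithLp.equiv 2 _ z) from fun z => rfl]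
  ext j
  have h := congrFun (hA.mulVec_eigenvectorBasis i) j
  simp only [Pi.smul_apply] at h ⊢
  rw [Matrix.toLin'_apply]
  simp only [WithLp.equiv_apply]
  rw [h]
  simp [Complex.real_smul]

-- self-adjointness of toEuclideanCLM of a Hermitian matrix
lemma clm_adjoint {A : Matrix (Fin n) (Fin n) ℂ} (hA : A.IsHermitian) :
    ContinuousLinearMap.adjoint (Matrix.toEuclideanCLM (𝕜 := ℂ) A) =
      Matrix.toEuclideanCLM (𝕜 := ℂ) A := by
  rw [← ContinuousLinearMap.star_eq_adjoint, ← map_star]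
  exact congrArg _ hA

lemma repr_clm_apply {A : Matrix (Fin n) (Fin n) ℂ} (hA : A.IsHermitian)
    (u : EuclideanSpace ℂ (Fin n)) (i : Fin n) :
    hA.eigenvectorBasis.repr (Matrix.toEuclideanCLM (𝕜 := ℂ) A u) i =
      (hA.eigenvalues i : ℂ) * hA.eigenvectorBasis.repr u i := by
  rw [OrthonormalBasis.repr_apply_apply, OrthonormalBasis.repr_apply_apply,
    ← ContinuousLinearMap.adjoint_inner_left, clm_adjoint hA, clm_eigen hA i,
    inner_smul_left]
  simp

lemma parseval {u : EuclideanSpace ℂ (Fin n)} (b : OrthonormalBasis (Fin n) ℂ (EuclideanSpace ℂ (Fin n))) :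
    ‖u‖^2 = ∑ i, ‖b.repr u i‖^2 := by
  rw [← b.repr.norm_map u, EuclideanSpace.norm_eq, Real.sq_sqrt (by positivity)]

lemma norm_sq_clm_apply (x : Matrix (Fin n) (Fin n) ℂ) (u : EuclideanSpace ℂ (Fin n)) :
    ‖Matrix.toEuclideanCLM (𝕜 := ℂ) x u‖^2 =
      ∑ i, (Matrix.isHermitian_conjTranspose_mul_self x).eigenvalues i *
        ‖(Matrix.isHermitian_conjTranspose_mul_self x).eigenvectorBasis.repr u i‖^2 := by
  set hA := Matrix.isHermitian_conjTranspose_mul_self x with hhA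
  set T := Matrix.toEuclideanCLM (𝕜 := ℂ) x with hT
  have h1 : (⟪T u, T u⟫ : ℂ) = ⟪u, Matrix.toEuclideanCLM (𝕜 := ℂ) (xᴴ * x) u⟫ := by
    rw [_root_.map_mul]
    rw [show Matrix.toEuclideanCLM (𝕜 := ℂ) xᴴ = ContinuousLinearMap.adjoint T by
      rw [← ContinuousLinearMap.star_eq_adjoint, ← map_star]
      rfl]
    rw [ContinuousLinearMap.mul_apply, ContinuousLinearMap.adjoint_inner_right]
  have h2 : (⟪u, Matrix.toEuclideanCLM (𝕜 := ℂ) (xᴴ * x) u⟫ : ℂ) =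
      ∑ i, (hA.eigenvalues i : ℂ) * ‖hA.eigenvectorBasis.repr u i‖^2 := by
    rw [← hA.eigenvectorBasis.repr.inner_map_map u]
    rw [PiLp.inner_apply]
    congr 1
    ext i
    rw [repr_clm_apply hA]
    simp only [RCLike.inner_apply]
    rw [mul_assoc]
    congr 1
    rw [mul_comm, RCLike.conj_mul]
    norm_cast
  have h3 : ‖T u‖^2 = RCLike.re (⟪T u, T u⟫ : ℂ) :=
    (inner_self_eq_norm_sq (𝕜 := ℂ) (T u)).symm
  rw [h3, h1, h2]
  rw [show (RCLike.re : ℂ → ℝ) = Complex.re from rfl, Complex.re_sum]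
  congr 1; ext i
  norm_cast

lemma repr_eq_zero_of_mem_span (b : OrthonormalBasis (Fin n) ℂ (EuclideanSpace ℂ (Fin n)))
    (s : Finset (Fin n)) {u : EuclideanSpace ℂ (Fin n)}
    (hu : u ∈ Submodule.span ℂ (⇑b '' (s : Set (Fin n)))) {j : Fin n} (hj : j ∉ s) :
    b.repr u j = 0 := by
  induction hu using Submodule.span_induction with
  | mem v hv =>
    obtain ⟨i, hi, rfl⟩ := hv
    rw [OrthonormalBasis.repr_apply_apply]
    rw [orthonormal_iff_ite.mp b.orthonormal]
    simp only [ite_eq_right_iff]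
    intro h; exact absurd (h ▸ hi) hj
  | zero => simp
  | add v w _ _ hv hw => simp [hv, hw]
  | smul c v _ hv => simp [hv]

lemma finrank_span_orthonormal (b : OrthonormalBasis (Fin n) ℂ (EuclideanSpace ℂ (Fin n)))
    (s : Finset (Fin n)) :
    Module.finrank ℂ (Submodule.span ℂ (⇑b '' (s : Set (Fin n)))) = s.card := by
  classical
  have hinj : Function.Injective ⇑b := b.orthonormal.linearIndependent.injective
  have hli : LinearIndependent ℂ ((↑) : (⇑b '' (s : Set (Fin n))) → EuclideanSpace ℂ (Fin n)) :=
    ((linearIndepOn_id_range_iff hinj).mpr b.orthonormal.linearIndependent).mono (Set.image_subset_range _ _)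
  have := finrank_span_set_eq_card (s := ⇑b '' (s : Set (Fin n)))
    hli
  rw [this]
  rw [Set.toFinset_image]
  rw [Finset.card_image_of_injective _ hinj]
  simp

lemma weyl_sv (x y : Matrix (Fin n) (Fin n) ℂ) (k : Fin n) :
    Real.sqrt ((Matrix.isHermitian_conjTranspose_mul_self x).eigenvalues
        (Tuple.sort (Matrix.isHermitian_conjTranspose_mul_self x).eigenvalues k)) ≤
      Real.sqrt ((Matrix.isHermitian_conjTranspose_mul_self y).eigenvalues
        (Tuple.sort (Matrix.isHermitian_conjTranspose_mul_self y).eigenvalues k)) +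
      ‖Matrix.toEuclideanCLM (𝕜 := ℂ) (x - y)‖ := by
  classical
  set hA := Matrix.isHermitian_conjTranspose_mul_self x with hhA
  set hB := Matrix.isHermitian_conjTranspose_mul_self y with hhB
  set lam := hA.eigenvalues with hlam
  set kap := hB.eigenvalues with hkap
  set p := Tuple.sort lam with hp
  set q := Tuple.sort kap with hq
  set v := hA.eigenvectorBasis with hv
  set w := hB.eigenvectorBasis with hw
  set δ := ‖Matrix.toEuclideanCLM (𝕜 := ℂ) (x - y)‖ with hδ
  set sX : Finset (Fin n) := (Finset.Ici k).image p with hsX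
  set sY : Finset (Fin n) := (Finset.Iic k).image q with hsY
  have cardX : sX.card = n - k := by
    rw [hsX, Finset.card_image_of_injective _ p.injective, Fin.card_Ici]
  have cardY : sY.card = (k : ℕ) + 1 := by
    rw [hsY, Finset.card_image_of_injective _ q.injective, Fin.card_Iic]
  set S := Submodule.span ℂ (⇑v '' (sX : Set (Fin n))) with hS
  set T := Submodule.span ℂ (⇑w '' (sY : Set (Fin n))) with hT
  have hST : S ⊓ T ≠ ⊥ := by
    intro hbot
    have h1 := Submodule.finrank_sup_add_finrank_inf_eq S T
    rw [hbot, finrank_bot] at h1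
    have h2 : Module.finrank ℂ ↥(S ⊔ T) ≤ n := by
      have h3 := Submodule.finrank_le (S ⊔ T)
      rwa [finrank_euclideanSpace_fin] at h3
    have frS : Module.finrank ℂ ↥S = sX.card := by rw [hS]; exact finrank_span_orthonormal v sX
    have frT : Module.finrank ℂ ↥T = sY.card := by rw [hT]; exact finrank_span_orthonormal w sY
    rw [frS, frT, cardX, cardY] at h1
    have hk := k.isLt
    omega
  obtain ⟨u₀, hu₀mem, hu₀⟩ := Submodule.exists_mem_ne_zero_of_ne_bot hST
  have hu₀n : (0:ℝ) < ‖u₀‖ := norm_pos_iff.2 hu₀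
  set u : EuclideanSpace ℂ (Fin n) := ((‖u₀‖ : ℂ))⁻¹ • u₀ with hu
  have hun : ‖u‖ = 1 := by
    rw [hu, norm_smul]
    simp [norm_inv, hu₀n.ne']
  have huS : u ∈ S := Submodule.smul_mem S _ ((Submodule.mem_inf.1 hu₀mem).1)
  have huT : u ∈ T := Submodule.smul_mem T _ ((Submodule.mem_inf.1 hu₀mem).2)
  -- lower bound for x
  have hmonoX := Tuple.monotone_sort lam
  have hmonoY := Tuple.monotone_sort kap
  have hux : lam (p k) ≤ ‖Matrix.toEuclideanCLM (𝕜 := ℂ) x u‖^2 := by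
    rw [norm_sq_clm_apply]
    have hpar : (1:ℝ) = ∑ i, ‖v.repr u i‖^2 := by
      have := parseval (u := u) v
      rwa [hun, one_pow] at this
    calc lam (p k) = lam (p k) * ∑ i, ‖v.repr u i‖^2 := by rw [← hpar, mul_one]
    _ = ∑ i, lam (p k) * ‖v.repr u i‖^2 := by rw [Finset.mul_sum]
    _ ≤ ∑ i, lam i * ‖v.repr u i‖^2 := by
        apply Finset.sum_le_sum
        intro i _
        by_cases hi : i ∈ sX
        · obtain ⟨m, hm, rfl⟩ := Finset.mem_image.1 hi
          have : lam (p k) ≤ lam (p m) := hmonoX (Finset.mem_Ici.1 hm)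
          exact mul_le_mul_of_nonneg_right this (by positivity)
        · rw [repr_eq_zero_of_mem_span v sX huS hi]
          simp
  have huy : ‖Matrix.toEuclideanCLM (𝕜 := ℂ) y u‖^2 ≤ kap (q k) := by
    rw [norm_sq_clm_apply]
    have hpar : (1:ℝ) = ∑ i, ‖w.repr u i‖^2 := by
      have := parseval (u := u) w
      rwa [hun, one_pow] at this
    have hstep : ∑ i, kap i * ‖w.repr u i‖^2 ≤ ∑ i, kap (q k) * ‖w.repr u i‖^2 := by
      apply Finset.sum_le_sum
      intro i _
      by_cases hi : i ∈ sY
      · obtain ⟨m, hm, rfl⟩ := Finset.mem_image.1 hi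
        have : kap (q m) ≤ kap (q k) := hmonoY (Finset.mem_Iic.1 hm)
        exact mul_le_mul_of_nonneg_right this (by positivity)
      · rw [repr_eq_zero_of_mem_span w sY huT hi]
        simp
    calc ∑ i, kap i * ‖w.repr u i‖^2 ≤ ∑ i, kap (q k) * ‖w.repr u i‖^2 := hstep
    _ = kap (q k) := by rw [← Finset.mul_sum, ← hpar, mul_one]
  -- combine
  have hsplit : Matrix.toEuclideanCLM (𝕜 := ℂ) x u =
      Matrix.toEuclideanCLM (𝕜 := ℂ) y u + Matrix.toEuclideanCLM (𝕜 := ℂ) (x - y) u := by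
    rw [map_sub, ContinuousLinearMap.sub_apply]
    abel
  calc Real.sqrt (lam (p k)) ≤ Real.sqrt (‖Matrix.toEuclideanCLM (𝕜 := ℂ) x u‖^2) :=
        Real.sqrt_le_sqrt hux
  _ = ‖Matrix.toEuclideanCLM (𝕜 := ℂ) x u‖ := Real.sqrt_sq (norm_nonneg _)
  _ ≤ ‖Matrix.toEuclideanCLM (𝕜 := ℂ) y u‖ + ‖Matrix.toEuclideanCLM (𝕜 := ℂ) (x - y) u‖ := by
        rw [hsplit]; exact norm_add_le _ _
  _ ≤ Real.sqrt (kap (q k)) + δ := by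
        gcongr
        · calc ‖Matrix.toEuclideanCLM (𝕜 := ℂ) y u‖
              = Real.sqrt (‖Matrix.toEuclideanCLM (𝕜 := ℂ) y u‖^2) :=
                (Real.sqrt_sq (norm_nonneg _)).symm
          _ ≤ Real.sqrt (kap (q k)) := Real.sqrt_le_sqrt huy
        · calc ‖Matrix.toEuclideanCLM (𝕜 := ℂ) (x - y) u‖ ≤ δ * ‖u‖ :=
                (Matrix.toEuclideanCLM (𝕜 := ℂ) (x - y)).le_opNorm u
          _ = δ := by rw [hun, mul_one]

lemma sqrt_eigen_le (x : Matrix (Fin n) (Fin n) ℂ) (i : Fin n) :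
    Real.sqrt ((Matrix.isHermitian_conjTranspose_mul_self x).eigenvalues i) ≤
      ‖Matrix.toEuclideanCLM (𝕜 := ℂ) x‖ := by
  classical
  set hA := Matrix.isHermitian_conjTranspose_mul_self x
  set v := hA.eigenvectorBasis with hv
  have h := norm_sq_clm_apply x (v i)
  have hrepr : ∀ j, v.repr (v i) j = if j = i then 1 else 0 := by
    intro j
    rw [hv, OrthonormalBasis.repr_self]
    exact EuclideanSpace.single_apply i 1 j
  have hsum : ∑ j, hA.eigenvalues j * ‖v.repr (v i) j‖^2 = hA.eigenvalues i := by
    rw [Finset.sum_eq_single i]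
    · rw [hrepr i]; simp
    · intro j _ hj; rw [hrepr j]; simp [hj]
    · intro h; exact absurd (Finset.mem_univ i) h
  rw [hsum] at h
  have hnorm1 : ‖v i‖ = 1 := v.orthonormal.1 i
  have hle : ‖Matrix.toEuclideanCLM (𝕜 := ℂ) x (v i)‖ ≤ ‖Matrix.toEuclideanCLM (𝕜 := ℂ) x‖ := by
    have := (Matrix.toEuclideanCLM (𝕜 := ℂ) x).le_opNorm (v i)
    rwa [hnorm1, mul_one] at this
  calc Real.sqrt (hA.eigenvalues i) = Real.sqrt (‖Matrix.toEuclideanCLM (𝕜 := ℂ) x (v i)‖^2) := by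
        rw [← h]
  _ = ‖Matrix.toEuclideanCLM (𝕜 := ℂ) x (v i)‖ := Real.sqrt_sq (norm_nonneg _)
  _ ≤ ‖Matrix.toEuclideanCLM (𝕜 := ℂ) x‖ := hle

lemma matOpNorm_def {n : ℕ} (A : Matrix (Fin n) (Fin n) ℂ) :
    matOpNorm A = ‖Matrix.toEuclideanCLM (𝕜 := ℂ) A‖ := rfl

end Aux

/-- Lipschitz continuity of the von Neumann entropy on matrices. -/
theorem vnEnt_lipschitz {n : ℕ} (hn : 0 < n)
    (x y : Matrix (Fin n) (Fin n) ℂ) (t : ℝ)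
    (ht : t = max (max (matOpNorm x) (matOpNorm y)) 1) :
    |vnEnt x - vnEnt y| ≤ (4 * t * Real.log t + 2 * t) * n * matOpNorm (x - y) := by
  classical
  set hA := Matrix.isHermitian_conjTranspose_mul_self x
  set hB := Matrix.isHermitian_conjTranspose_mul_self y
  set lam := hA.eigenvalues with hlam
  set kap := hB.eigenvalues with hkap
  set p := Tuple.sort lam with hp
  set q := Tuple.sort kap with hq
  set δ := matOpNorm (x - y) with hδ
  set L := 4 * t * Real.log t + 2 * t with hL
  have ht1 : 1 ≤ t := ht ▸ le_max_right _ 1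
  have hlt : 0 ≤ Real.log t := Real.log_nonneg ht1
  have hL0 : 0 ≤ L := by rw [hL]; nlinarith
  have hδ0 : 0 ≤ δ := norm_nonneg _
  have hxt : matOpNorm x ≤ t := ht ▸ le_trans (le_max_left _ _) (le_max_left _ _)
  have hyt : matOpNorm y ≤ t := ht ▸ le_trans (le_max_right _ _) (le_max_left _ _)
  set σ : Fin n → ℝ := fun i => Real.sqrt (lam (p i)) with hσ
  set τ : Fin n → ℝ := fun i => Real.sqrt (kap (q i)) with hτ
  have hlam0 : ∀ i, 0 ≤ lam i := fun i =>
    Matrix.eigenvalues_conjTranspose_mul_self_nonneg x i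
  have hkap0 : ∀ i, 0 ≤ kap i := fun i =>
    Matrix.eigenvalues_conjTranspose_mul_self_nonneg y i
  have hσmem : ∀ i, σ i ∈ Set.Icc (0:ℝ) t := fun i =>
    ⟨Real.sqrt_nonneg _, le_trans (sqrt_eigen_le x (p i)) hxt⟩
  have hτmem : ∀ i, τ i ∈ Set.Icc (0:ℝ) t := fun i =>
    ⟨Real.sqrt_nonneg _, le_trans (sqrt_eigen_le y (q i)) hyt⟩
  have hστ : ∀ i, |σ i - τ i| ≤ δ := by
    intro i
    rw [abs_sub_le_iff]
    constructor
    · have h1 := weyl_sv x y i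
      have : σ i ≤ τ i + δ := h1
      linarith
    · have h2 := weyl_sv y x i
      have hyx : ‖Matrix.toEuclideanCLM (𝕜 := ℂ) (y - x)‖ = δ := by
        rw [show y - x = -(x - y) by abel, map_neg, norm_neg]; rfl
      rw [hyx] at h2
      have : τ i ≤ σ i + δ := h2
      linarith
  -- rewrite entropies in terms of σ, τ
  have hentx : vnEnt x = -∑ i, (σ i)^2 * Real.log ((σ i)^2) := by
    rw [vnEnt]
    congr 1
    rw [← Equiv.sum_comp p (fun i => lam i * Real.log (lam i))]
    apply Finset.sum_congr rfl
    intro i _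
    rw [hσ]
    simp only []
    rw [Real.sq_sqrt (hlam0 (p i))]
  have henty : vnEnt y = -∑ i, (τ i)^2 * Real.log ((τ i)^2) := by
    rw [vnEnt]
    congr 1
    rw [← Equiv.sum_comp q (fun i => kap i * Real.log (kap i))]
    apply Finset.sum_congr rfl
    intro i _
    rw [hτ]
    simp only []
    rw [Real.sq_sqrt (hkap0 (q i))]
  rw [hentx, henty]
  have hkey : |(-∑ i, (σ i)^2 * Real.log ((σ i)^2)) - (-∑ i, (τ i)^2 * Real.log ((τ i)^2))|
      ≤ ∑ i : Fin n, L * δ := by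
    rw [neg_sub_neg, ← Finset.sum_sub_distrib]
    refine le_trans (Finset.abs_sum_le_sum_abs _ _) (Finset.sum_le_sum fun i _ => ?_)
    rw [abs_sub_comm]
    calc |(σ i)^2 * Real.log ((σ i)^2) - (τ i)^2 * Real.log ((τ i)^2)|
        ≤ L * |σ i - τ i| := F_lipschitz ht1 (hσmem i) (hτmem i)
    _ ≤ L * δ := mul_le_mul_of_nonneg_left (hστ i) hL0
  refine le_trans hkey ?_
  rw [Finset.sum_const, Finset.card_univ, Fintype.card_fin, nsmul_eq_mul]
  rw [hL]
  ring_nf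
  exact le_refl _
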